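/- One-step discrete L^q stability: in the discrete upwind setting, let q ∈ (1,∞), let ρⁿ_K ≥ 0 and fⁿ_K ≥ 0 for all K ∈ 𝒯, let δ > 0, and let ρⁿ⁺¹ be the solution of one step of the implicit upwind scheme. Set λ := δ · max_{K∈𝒯} ((div u)_K)⁻, where (t)⁻ = max(−t,0). Then ‖ρⁿ⁺¹‖_{ℓ^q} · (1 − ((q−1)/q) λ) ≤ ‖ρⁿ‖_{ℓ^q} + δ ‖fⁿ‖_{ℓ^q}. -/

import Mathlib

open Finset

/-- **One-step discrete `L^q` stability of the implicit upwind scheme.**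
For `q ∈ (1,∞)`, nonnegative data `ρ`, `f`, time step `δ > 0` and `ρ'` the solution of
one step of the implicit upwind scheme, with `λ := δ · max_K ((div u)_K)⁻` one has
`‖ρ'‖_{ℓ^q} (1 − ((q−1)/q) λ) ≤ ‖ρ‖_{ℓ^q} + δ ‖f‖_{ℓ^q}`. -/
theorem upwind_step_Lq_stability {ι : Type*} [Fintype ι] [Nonempty ι] [DecidableEq ι]
    (vol : ι → ℝ) (hvol : ∀ K, 0 < vol K)
    (edge : ι → ι → ℝ) (hedge_symm : ∀ K L, edge K L = edge L K)
    (hedge_nonneg : ∀ K L, 0 ≤ edge K L)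
    (u : ι → ι → ℝ) (hu_antisymm : ∀ K L, u K L = - u L K)
    (hu_edge : ∀ K L, edge K L = 0 → u K L = 0)
    (q : ℝ) (hq : 1 < q)
    (δ : ℝ) (hδ : 0 < δ) (ρ f ρ' : ι → ℝ)
    (hρ : ∀ K, 0 ≤ ρ K) (hf : ∀ K, 0 ≤ f K)
    (hstep : ∀ K : ι,
      (ρ' K - ρ K) / δ +
        ∑ L ∈ univ.erase K, edge K L / vol K *
          (max (u K L) 0 * ρ' K - max (-u K L) 0 * ρ' L) = f K)
    (lam : ℝ)
    (hlam : lam = δ * univ.sup' univ_nonempty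
      (fun K => max (-((∑ L ∈ univ.erase K, edge K L * u K L) / vol K)) 0)) :
    (∑ K, vol K * |ρ' K| ^ q) ^ (1/q) * (1 - (q - 1)/q * lam) ≤
      (∑ K, vol K * |ρ K| ^ q) ^ (1/q) + δ * (∑ K, vol K * |f K| ^ q) ^ (1/q) := by
  have hq0 : (0:ℝ) < q := lt_trans one_pos hq
  have hconj : q.HolderConjugate (q/(q-1)) := by
    have := Real.HolderConjugate.conjExponent hq
    rwa [Real.conjExponent] at this
  set p : ℝ := q/(q-1) with hpdef
  have hp0 : (0:ℝ) < p := hconj.symm.pos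
  have hinv : 1/q + 1/p = 1 := by
    rw [one_div, one_div]; exact hconj.inv_add_inv_eq_one
  have hqp : (q - 1) * p = q := hconj.sub_one_mul_conj
  -- the test function φ
  set φ : ι → ℝ := fun K => Real.sign (ρ' K) * |ρ' K| ^ (q-1) with hφdef
  have habs1 : ∀ x : ℝ, |x| * |x| ^ (q-1) = |x| ^ q := by
    intro x
    rcases eq_or_ne x 0 with h | h
    · simp [h, Real.zero_rpow hq0.ne']
    · have hx : 0 < |x| := abs_pos.2 h
      have hxx : |x| ^ q = |x| ^ (1 + (q - 1)) := by congr 1; ring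
      rw [hxx, Real.rpow_add hx, Real.rpow_one]
  have hxφ : ∀ K, ρ' K * φ K = |ρ' K| ^ q := by
    intro K
    have hs : ρ' K * Real.sign (ρ' K) = |ρ' K| := by
      rcases lt_trichotomy (ρ' K) 0 with h | h | h
      · rw [Real.sign_of_neg h, abs_of_neg h]; ring
      · simp [h]
      · rw [Real.sign_of_pos h, abs_of_pos h]; ring
    calc ρ' K * φ K = (ρ' K * Real.sign (ρ' K)) * |ρ' K| ^ (q-1) := by
          rw [hφdef]; ring
      _ = |ρ' K| * |ρ' K| ^ (q-1) := by rw [hs]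
      _ = |ρ' K| ^ q := habs1 _
  have hφabs : ∀ K, |φ K| ≤ |ρ' K| ^ (q-1) := by
    intro K
    rw [hφdef]
    have h1 : |Real.sign (ρ' K)| ≤ 1 := by
      rcases lt_trichotomy (ρ' K) 0 with h | h | h <;>
        simp [Real.sign_of_neg, Real.sign_of_pos, h]
    calc |Real.sign (ρ' K) * |ρ' K| ^ (q-1)|
        = |Real.sign (ρ' K)| * abs (|ρ' K| ^ (q-1)) := abs_mul _ _
      _ = |Real.sign (ρ' K)| * |ρ' K| ^ (q-1) := by
          rw [abs_of_nonneg (Real.rpow_nonneg (abs_nonneg _) _)]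
      _ ≤ |ρ' K| ^ (q-1) :=
          mul_le_of_le_one_left (Real.rpow_nonneg (abs_nonneg _) _) h1
  -- Young's inequality in the form we need
  have hyoung : ∀ a b : ℝ, 0 ≤ a → 0 ≤ b →
      a * b ^ (q-1) ≤ a ^ q / q + (q-1)/q * b ^ q := by
    intro a b ha hb
    have h := Real.young_inequality_of_nonneg ha (Real.rpow_nonneg hb (q-1)) hconj
    have h2 : (b ^ (q-1)) ^ p = b ^ q := by
      rw [← Real.rpow_mul hb, hqp]
    rw [h2] at h
    have hq1 : q - 1 ≠ 0 := ne_of_gt (by linarith)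
    have h3 : b ^ q / p = (q-1)/q * b ^ q := by
      rw [hpdef]
      field_simp
    linarith [h]
  -- basic quantities
  set S' : ℝ := ∑ K, vol K * |ρ' K| ^ q with hS'def
  have hS'nonneg : 0 ≤ S' := Finset.sum_nonneg fun K _ =>
    mul_nonneg (hvol K).le (Real.rpow_nonneg (abs_nonneg _) _)
  -- weighted Hölder inequality
  have holder : ∀ g : ι → ℝ, (∀ K, 0 ≤ g K) →
      ∑ K, vol K * (g K * |ρ' K| ^ (q-1)) ≤
        (∑ K, vol K * |g K| ^ q) ^ (1/q) * S' ^ (1/p) := by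
    intro g hg
    have h := Real.inner_le_Lp_mul_Lq univ (fun K => vol K ^ (1/q) * g K)
      (fun K => vol K ^ (1/p) * |ρ' K| ^ (q-1)) hconj
    have e1 : ∀ K : ι, (vol K ^ (1/q) * g K) * (vol K ^ (1/p) * |ρ' K| ^ (q-1))
        = vol K * (g K * |ρ' K| ^ (q-1)) := by
      intro K
      have hv : vol K ^ (1/q) * vol K ^ (1/p) = vol K := by
        rw [← Real.rpow_add (hvol K), hinv, Real.rpow_one]
      linear_combination (g K * |ρ' K| ^ (q-1)) * hv
    have e2 : ∀ K : ι, |vol K ^ (1/q) * g K| ^ q = vol K * |g K| ^ q := by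
      intro K
      rw [abs_mul, abs_of_nonneg (Real.rpow_nonneg (hvol K).le _),
        Real.mul_rpow (Real.rpow_nonneg (hvol K).le _) (abs_nonneg _),
        ← Real.rpow_mul (hvol K).le, one_div, inv_mul_cancel₀ hq0.ne', Real.rpow_one]
    have e3 : ∀ K : ι, |vol K ^ (1/p) * |ρ' K| ^ (q-1)| ^ p = vol K * |ρ' K| ^ q := by
      intro K
      rw [abs_mul, abs_of_nonneg (Real.rpow_nonneg (hvol K).le _),
        abs_of_nonneg (Real.rpow_nonneg (abs_nonneg _) _),
        Real.mul_rpow (Real.rpow_nonneg (hvol K).le _)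
          (Real.rpow_nonneg (abs_nonneg _) _),
        ← Real.rpow_mul (hvol K).le, one_div, inv_mul_cancel₀ hp0.ne', Real.rpow_one,
        ← Real.rpow_mul (abs_nonneg _), hqp]
    calc ∑ K, vol K * (g K * |ρ' K| ^ (q-1))
        = ∑ K, (vol K ^ (1/q) * g K) * (vol K ^ (1/p) * |ρ' K| ^ (q-1)) :=
          Finset.sum_congr rfl fun K _ => (e1 K).symm
      _ ≤ (∑ K, |vol K ^ (1/q) * g K| ^ q) ^ (1/q) *
            (∑ K, |vol K ^ (1/p) * |ρ' K| ^ (q-1)| ^ p) ^ (1/p) := h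
      _ = (∑ K, vol K * |g K| ^ q) ^ (1/q) * S' ^ (1/p) := by
          rw [hS'def]
          congr 2
          · exact Finset.sum_congr rfl fun K _ => e2 K
          · exact Finset.sum_congr rfl fun K _ => e3 K
  -- the scheme rewritten: multiply by δ * vol K
  have key : ∀ K, vol K * (ρ' K - ρ K) +
      δ * ∑ L ∈ univ.erase K, edge K L *
        (max (u K L) 0 * ρ' K - max (-u K L) 0 * ρ' L)
      = δ * (vol K * f K) := by
    intro K
    have h : (ρ' K - ρ K)/δ + (∑ L ∈ univ.erase K, edge K L *
        (max (u K L) 0 * ρ' K - max (-u K L) 0 * ρ' L)) / vol K = f K := by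
      rw [← hstep K]
      congr 1
      rw [Finset.sum_div]
      exact Finset.sum_congr rfl fun L _ => by ring
    field_simp [hδ.ne', (hvol K).ne'] at h
    rw [show ∑ x ∈ univ.erase K, edge K x * (ρ' K * max (u K x) 0 - max (-u K x) 0 * ρ' x) = ∑ x ∈ univ.erase K, edge K x * (max (u K x) 0 * ρ' K - max (-u K x) 0 * ρ' x) from Finset.sum_congr rfl fun L _ => by ring, Finset.sum_erase_eq_sub (Finset.mem_univ K)] at h
    rw [Finset.sum_erase_eq_sub (Finset.mem_univ K)]
    linarith [h]
  -- sum the scheme against φ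
  have hsum : (∑ K, vol K * (ρ' K - ρ K) * φ K)
      + δ * ∑ K, ∑ L ∈ univ.erase K, edge K L *
          (max (u K L) 0 * ρ' K - max (-u K L) 0 * ρ' L) * φ K
      = δ * ∑ K, vol K * f K * φ K := by
    rw [Finset.mul_sum, Finset.mul_sum, ← Finset.sum_add_distrib]
    refine Finset.sum_congr rfl fun K _ => ?_
    have h2 : ∑ L ∈ univ.erase K, edge K L *
        (max (u K L) 0 * ρ' K - max (-u K L) 0 * ρ' L) * φ K
        = (∑ L ∈ univ.erase K, edge K L *
            (max (u K L) 0 * ρ' K - max (-u K L) 0 * ρ' L)) * φ K :=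
      (Finset.sum_mul _ _ _).symm
    linear_combination (φ K) * key K + δ * h2
  -- diagonal terms vanish
  have huKK : ∀ K, u K K = 0 := fun K => by have := hu_antisymm K K; linarith
  have herase : ∀ a : ι → ι → ℝ, (∀ K, a K K = 0) →
      ∑ K, ∑ L ∈ univ.erase K, a K L = ∑ K, ∑ L, a K L := by
    intro a ha
    refine Finset.sum_congr rfl fun K _ => ?_
    rw [← Finset.sum_erase_add univ _ (Finset.mem_univ K), ha K, add_zero]
  have hTerase : ∑ K, ∑ L ∈ univ.erase K, edge K L *
      (max (u K L) 0 * ρ' K - max (-u K L) 0 * ρ' L) * φ K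
      = ∑ K, ∑ L, edge K L *
          (max (u K L) 0 * ρ' K - max (-u K L) 0 * ρ' L) * φ K := by
    refine herase _ fun K => ?_
    rw [huKK K]
    norm_num
  set T : ℝ := ∑ K, ∑ L, edge K L *
      (max (u K L) 0 * ρ' K - max (-u K L) 0 * ρ' L) * φ K with hTdef
  -- symmetrization of the flux term
  have hswap1 : ∑ K, ∑ L, edge K L * max (-u K L) 0 * (ρ' L * φ K)
      = ∑ K, ∑ L, edge K L * max (u K L) 0 * (ρ' K * φ L) := by
    rw [Finset.sum_comm]
    refine Finset.sum_congr rfl fun K _ => Finset.sum_congr rfl fun L _ => ?_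
    rw [hedge_symm L K, hu_antisymm L K, neg_neg]
  have hA : T = ∑ K, ∑ L, edge K L * max (u K L) 0 * (ρ' K * φ K - ρ' K * φ L) := by
    rw [hTdef]
    calc (∑ K, ∑ L, edge K L * (max (u K L) 0 * ρ' K - max (-u K L) 0 * ρ' L) * φ K)
        = (∑ K, ∑ L, edge K L * max (u K L) 0 * (ρ' K * φ K))
          - ∑ K, ∑ L, edge K L * max (-u K L) 0 * (ρ' L * φ K) := by
          rw [← Finset.sum_sub_distrib]
          exact Finset.sum_congr rfl fun K _ => by
            rw [← Finset.sum_sub_distrib]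
            exact Finset.sum_congr rfl fun L _ => by ring
      _ = (∑ K, ∑ L, edge K L * max (u K L) 0 * (ρ' K * φ K))
          - ∑ K, ∑ L, edge K L * max (u K L) 0 * (ρ' K * φ L) := by rw [hswap1]
      _ = ∑ K, ∑ L, edge K L * max (u K L) 0 * (ρ' K * φ K - ρ' K * φ L) := by
          rw [← Finset.sum_sub_distrib]
          exact Finset.sum_congr rfl fun K _ => by
            rw [← Finset.sum_sub_distrib]
            exact Finset.sum_congr rfl fun L _ => by ring
  -- pointwise Young bound
  have hstepB : ∀ K L : ι, (q-1)/q * (|ρ' K| ^ q - |ρ' L| ^ q)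
      ≤ ρ' K * φ K - ρ' K * φ L := by
    intro K L
    have h1 : ρ' K * φ L ≤ |ρ' K| * |ρ' L| ^ (q-1) := by
      calc ρ' K * φ L ≤ |ρ' K * φ L| := le_abs_self _
        _ = |ρ' K| * |φ L| := abs_mul _ _
        _ ≤ |ρ' K| * |ρ' L| ^ (q-1) :=
            mul_le_mul_of_nonneg_left (hφabs L) (abs_nonneg _)
    have h2 := hyoung |ρ' K| |ρ' L| (abs_nonneg _) (abs_nonneg _)
    have h3 : |ρ' K| ^ q - (|ρ' K| ^ q / q + (q-1)/q * |ρ' L| ^ q)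
        = (q-1)/q * (|ρ' K| ^ q - |ρ' L| ^ q) := by field_simp; ring
    have h4 := hxφ K
    linarith
  set W : ℝ := ∑ K, ∑ L, edge K L * max (u K L) 0 * (|ρ' K| ^ q - |ρ' L| ^ q)
    with hWdef
  have hB : (q-1)/q * W ≤ T := by
    rw [hA, hWdef, Finset.mul_sum]
    refine Finset.sum_le_sum fun K _ => ?_
    rw [Finset.mul_sum]
    refine Finset.sum_le_sum fun L _ => ?_
    have hnn : 0 ≤ edge K L * max (u K L) 0 :=
      mul_nonneg (hedge_nonneg K L) (le_max_right _ _)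
    have := mul_le_mul_of_nonneg_left (hstepB K L) hnn
    linarith
  -- rewrite W as a divergence sum
  have hmaxsub : ∀ a : ℝ, max a 0 - max (-a) 0 = a := by
    intro a
    rcases le_total a 0 with h | h
    · rw [max_eq_right h, max_eq_left (neg_nonneg.2 h)]; ring
    · rw [max_eq_left h, max_eq_right (neg_nonpos.2 h)]; ring
  have hswap2 : ∑ K, ∑ L, edge K L * max (u K L) 0 * |ρ' L| ^ q
      = ∑ K, ∑ L, edge K L * max (-u K L) 0 * |ρ' K| ^ q := by
    rw [Finset.sum_comm]
    refine Finset.sum_congr rfl fun K _ => Finset.sum_congr rfl fun L _ => ?_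
    rw [hedge_symm L K, hu_antisymm L K]
  have hC : W = ∑ K, |ρ' K| ^ q * ∑ L, edge K L * u K L := by
    rw [hWdef]
    calc (∑ K, ∑ L, edge K L * max (u K L) 0 * (|ρ' K| ^ q - |ρ' L| ^ q))
        = (∑ K, ∑ L, edge K L * max (u K L) 0 * |ρ' K| ^ q)
          - ∑ K, ∑ L, edge K L * max (u K L) 0 * |ρ' L| ^ q := by
          rw [← Finset.sum_sub_distrib]
          exact Finset.sum_congr rfl fun K _ => by
            rw [← Finset.sum_sub_distrib]
            exact Finset.sum_congr rfl fun L _ => by ring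
      _ = (∑ K, ∑ L, edge K L * max (u K L) 0 * |ρ' K| ^ q)
          - ∑ K, ∑ L, edge K L * max (-u K L) 0 * |ρ' K| ^ q := by rw [hswap2]
      _ = ∑ K, ∑ L, edge K L * u K L * |ρ' K| ^ q := by
          rw [← Finset.sum_sub_distrib]
          refine Finset.sum_congr rfl fun K _ => ?_
          rw [← Finset.sum_sub_distrib]
          refine Finset.sum_congr rfl fun L _ => ?_
          linear_combination (edge K L * |ρ' K| ^ q) * hmaxsub (u K L)
      _ = ∑ K, |ρ' K| ^ q * ∑ L, edge K L * u K L := by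
          refine Finset.sum_congr rfl fun K _ => ?_
          rw [Finset.mul_sum]
          exact Finset.sum_congr rfl fun L _ => by ring
  -- divergence bound
  set M : ℝ := univ.sup' univ_nonempty
      (fun K => max (-((∑ L ∈ univ.erase K, edge K L * u K L) / vol K)) 0) with hMdef
  subst hlam
  have hM0 : 0 ≤ M := by
    obtain ⟨K0⟩ := (inferInstance : Nonempty ι)
    rw [hMdef]
    exact le_trans (le_max_right _ 0) (Finset.le_sup'
      (fun K => max (-((∑ L ∈ univ.erase K, edge K L * u K L) / vol K)) 0)
      (Finset.mem_univ K0))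
  have hD : ∀ K, ∑ L, edge K L * u K L = ∑ L ∈ univ.erase K, edge K L * u K L := by
    intro K
    rw [← Finset.sum_erase_add univ _ (Finset.mem_univ K), huKK K, mul_zero, add_zero]
  have hdiv : ∀ K, -(M * vol K) ≤ ∑ L, edge K L * u K L := by
    intro K
    have h1 : max (-((∑ L ∈ univ.erase K, edge K L * u K L) / vol K)) 0 ≤ M := by
      rw [hMdef]
      exact Finset.le_sup'
        (fun K => max (-((∑ L ∈ univ.erase K, edge K L * u K L) / vol K)) 0)
        (Finset.mem_univ K)
    have h1' : -((∑ L ∈ univ.erase K, edge K L * u K L) / vol K) ≤ M :=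
      le_trans (le_max_left _ _) h1
    rw [hD]
    have h2 : (-(∑ L ∈ univ.erase K, edge K L * u K L)) / vol K ≤ M := by
      rw [neg_div]; exact h1'
    have h3 := (div_le_iff₀ (hvol K)).mp h2
    linarith
  have hW : -(M * S') ≤ W := by
    rw [hC, hS'def, Finset.mul_sum, ← Finset.sum_neg_distrib]
    refine Finset.sum_le_sum fun K _ => ?_
    have hr : 0 ≤ |ρ' K| ^ q := Real.rpow_nonneg (abs_nonneg _) _
    have := mul_le_mul_of_nonneg_left (hdiv K) hr
    linarith
  -- put everything together
  have hc0 : 0 ≤ (q-1)/q := div_nonneg (by linarith) hq0.le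
  have hT : -((q-1)/q * (M * S')) ≤ T := by
    have := mul_le_mul_of_nonneg_left hW hc0
    linarith
  have hsplit : ∑ K, vol K * (ρ' K - ρ K) * φ K
      = S' - ∑ K, vol K * (ρ K * φ K) := by
    rw [hS'def, ← Finset.sum_sub_distrib]
    refine Finset.sum_congr rfl fun K _ => ?_
    rw [← hxφ K]; ring
  have hρφ : ∑ K, vol K * (ρ K * φ K)
      ≤ (∑ K, vol K * |ρ K| ^ q) ^ (1/q) * S' ^ (1/p) := by
    refine le_trans ?_ (holder ρ hρ)
    refine Finset.sum_le_sum fun K _ => ?_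
    have h1 : ρ K * φ K ≤ ρ K * |ρ' K| ^ (q-1) :=
      mul_le_mul_of_nonneg_left (le_trans (le_abs_self _) (hφabs K)) (hρ K)
    exact mul_le_mul_of_nonneg_left h1 (hvol K).le
  have hfφ : ∑ K, vol K * f K * φ K
      ≤ (∑ K, vol K * |f K| ^ q) ^ (1/q) * S' ^ (1/p) := by
    refine le_trans ?_ (holder f hf)
    refine Finset.sum_le_sum fun K _ => ?_
    have h1 : f K * φ K ≤ f K * |ρ' K| ^ (q-1) :=
      mul_le_mul_of_nonneg_left (le_trans (le_abs_self _) (hφabs K)) (hf K)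
    have := mul_le_mul_of_nonneg_left h1 (hvol K).le
    linarith
  have hδfφ := mul_le_mul_of_nonneg_left hfφ hδ.le
  -- the main inequality before dividing by S'^(1/p)
  have hmain : S' * (1 - (q-1)/q * (δ * M))
      ≤ ((∑ K, vol K * |ρ K| ^ q) ^ (1/q) + δ * (∑ K, vol K * |f K| ^ q) ^ (1/q))
          * S' ^ (1/p) := by
    rw [hTerase] at hsum
    have hδT := mul_le_mul_of_nonneg_left hT hδ.le
    nlinarith [hsum, hsplit, hρφ, hδfφ, hδT]
  -- conclude
  have hB0 : 0 ≤ (∑ K, vol K * |ρ K| ^ q) ^ (1/q)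
      + δ * (∑ K, vol K * |f K| ^ q) ^ (1/q) := by
    have h1 : (0:ℝ) ≤ (∑ K, vol K * |ρ K| ^ q) ^ (1/q) :=
      Real.rpow_nonneg (Finset.sum_nonneg fun K _ =>
        mul_nonneg (hvol K).le (Real.rpow_nonneg (abs_nonneg _) _)) _
    have h2 : (0:ℝ) ≤ (∑ K, vol K * |f K| ^ q) ^ (1/q) :=
      Real.rpow_nonneg (Finset.sum_nonneg fun K _ =>
        mul_nonneg (hvol K).le (Real.rpow_nonneg (abs_nonneg _) _)) _
    positivity
  rcases le_or_gt (1 - (q-1)/q * (δ * M)) 0 with hcase | hcase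
  · have h1 : S' ^ (1/q) * (1 - (q-1)/q * (δ * M)) ≤ 0 :=
      mul_nonpos_of_nonneg_of_nonpos (Real.rpow_nonneg hS'nonneg _) hcase
    linarith
  · rcases eq_or_lt_of_le hS'nonneg with hS0 | hS0
    · rw [← hS0, Real.zero_rpow (one_div_ne_zero hq0.ne'), zero_mul]
      exact hB0
    · have hfac : S' = S' ^ (1/q) * S' ^ (1/p) := by
        rw [← Real.rpow_add hS0, hinv, Real.rpow_one]
      have hSp : 0 < S' ^ (1/p) := Real.rpow_pos_of_pos hS0 _
      refine le_of_mul_le_mul_right ?_ hSp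
      calc S' ^ (1/q) * (1 - (q-1)/q * (δ * M)) * S' ^ (1/p)
          = S' * (1 - (q-1)/q * (δ * M)) := by
            conv_rhs => rw [hfac]
            ring
        _ ≤ ((∑ K, vol K * |ρ K| ^ q) ^ (1/q)
              + δ * (∑ K, vol K * |f K| ^ q) ^ (1/q)) * S' ^ (1/p) := hmain
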